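/- arXiv:2303.05410 — 3 statements merged into one kernel-verified Lean document; each statement's English description precedes it below -/
import Mathlib

section
/- Let f: R^n -> R be differentiable with L-Lipschitz gradient, h: R^n -> R_bar proper, and let t in (0, 1/L]. If x^+ is any point satisfying <grad f(x), x^+ - x> + (1/(2t))||x^+ - x||^2 + h(x^+) <= h(x), then f(x^+) + h(x^+) <= f(x) + h(x) - (1/(2t) - L/2) ||x^+ - x||^2. -/
open scoped RealInnerProductSpace

theorem descent_lemma' {n : ℕ} (f : EuclideanSpace ℝ (Fin n) → ℝ) (L : ℝ) (hL0 : 0 ≤ L)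
    (hf : Differentiable ℝ f)
    (hlip : ∀ a b, ‖gradient f a - gradient f b‖ ≤ L * ‖a - b‖)
    (x xp : EuclideanSpace ℝ (Fin n)) :
    f xp ≤ f x + ⟪gradient f x, xp - x⟫ + L / 2 * ‖xp - x‖ ^ 2 := by
  set d := xp - x with hd
  have hcont : Continuous (gradient f) :=
    (LipschitzWith.of_dist_le_mul (K := ⟨L, hL0⟩) (fun a b => by
      rw [dist_eq_norm, dist_eq_norm]; exact hlip a b)).continuous
  have hderiv : ∀ τ : ℝ, HasDerivAt (fun τ : ℝ => f (x + τ • d))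
      ⟪gradient f (x + τ • d), d⟫ τ := by
    intro τ
    have hc : HasDerivAt (fun τ : ℝ => x + τ • d) d τ := by
      simpa using ((hasDerivAt_id τ).smul_const d).const_add x
    have hg := (hf (x + τ • d)).hasGradientAt
    have := hg.hasFDerivAt.comp_hasDerivAt τ hc
    refine this.congr_deriv ?_
    exact InnerProductSpace.toDual_apply_apply
  have hcont' : Continuous fun τ : ℝ => ⟪gradient f (x + τ • d), d⟫ := by
    exact (Continuous.inner (hcont.comp (by continuity)) continuous_const)
  have hint : IntervalIntegrable (fun τ : ℝ => ⟪gradient f (x + τ • d), d⟫)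
      MeasureTheory.volume 0 1 := hcont'.intervalIntegrable 0 1
  have heq : f xp - f x = ∫ τ in (0:ℝ)..1, ⟪gradient f (x + τ • d), d⟫ := by
    have := intervalIntegral.integral_eq_sub_of_hasDerivAt
      (f := fun τ : ℝ => f (x + τ • d)) (fun τ _ => hderiv τ) hint
    simp only [zero_smul, one_smul, add_zero] at this
    rw [this]
    congr 1 <;> simp [hd]
  have hbound : ∀ τ ∈ Set.Icc (0:ℝ) 1,
      ⟪gradient f (x + τ • d), d⟫ ≤ ⟪gradient f x, d⟫ + L * τ * ‖d‖ ^ 2 := by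
    intro τ hτ
    have h1 : ⟪gradient f (x + τ • d) - gradient f x, d⟫ ≤
        ‖gradient f (x + τ • d) - gradient f x‖ * ‖d‖ := real_inner_le_norm _ _
    have h2 : ‖gradient f (x + τ • d) - gradient f x‖ ≤ L * (τ * ‖d‖) := by
      have := hlip (x + τ • d) x
      simpa [norm_smul, abs_of_nonneg hτ.1] using this
    have h3 : ‖gradient f (x + τ • d) - gradient f x‖ * ‖d‖ ≤ L * τ * ‖d‖ ^ 2 := by
      have := mul_le_mul_of_nonneg_right h2 (norm_nonneg d)
      nlinarith [norm_nonneg d]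
    have h4 := h1.trans h3
    rw [inner_sub_left] at h4
    linarith
  have hintineq : (∫ τ in (0:ℝ)..1, ⟪gradient f (x + τ • d), d⟫) ≤
      ∫ τ in (0:ℝ)..1, (⟪gradient f x, d⟫ + L * τ * ‖d‖ ^ 2) := by
    apply intervalIntegral.integral_mono_on (by norm_num) hint
    · exact (Continuous.intervalIntegrable (u := fun τ : ℝ => ⟪gradient f x, d⟫ + L * τ * ‖d‖ ^ 2) (by fun_prop) 0 1)
    · exact hbound
  have hval : (∫ τ in (0:ℝ)..1, (⟪gradient f x, d⟫ + L * τ * ‖d‖ ^ 2)) =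
      ⟪gradient f x, d⟫ + L / 2 * ‖d‖ ^ 2 := by
    rw [intervalIntegral.integral_add (intervalIntegrable_const)
      ((Continuous.intervalIntegrable (u := fun τ : ℝ => L * τ * ‖d‖ ^ 2) (by fun_prop) 0 1))]
    simp only [intervalIntegral.integral_const]
    rw [show (fun τ : ℝ => L * τ * ‖d‖ ^ 2) = fun τ : ℝ => (L * ‖d‖ ^ 2) * τ by
      ext τ; ring]
    rw [intervalIntegral.integral_const_mul, integral_id]
    simp only [smul_eq_mul]
    ring
  linarith [heq ▸ (hintineq.trans_eq hval)]

/-- Sufficient decrease of the proximal gradient step. -/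
theorem prox_grad_sufficient_decrease {n : ℕ}
    (f : EuclideanSpace ℝ (Fin n) → ℝ) (h : EuclideanSpace ℝ (Fin n) → EReal)
    (L t : ℝ) (hL : 0 < L)
    (hf : Differentiable ℝ f)
    (hlip : ∀ a b, ‖gradient f a - gradient f b‖ ≤ L * ‖a - b‖)
    (hne_bot : ∀ u, h u ≠ ⊥) (hproper : ∃ u, h u ≠ ⊤)
    (ht0 : 0 < t) (ht1 : t ≤ 1 / L)
    (x xp : EuclideanSpace ℝ (Fin n))
    (hstep : ((⟪gradient f x, xp - x⟫ + 1 / (2 * t) * ‖xp - x‖ ^ 2 : ℝ) : EReal) + h xp ≤ h x) :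
    (f xp : EReal) + h xp ≤
      (f x : EReal) + h x - ((1 / (2 * t) - L / 2) * ‖xp - x‖ ^ 2 : ℝ) := by
  have hdesc := descent_lemma' f L hL.le hf hlip x xp
  by_cases hxt : h x = ⊤
  · rw [hxt]
    have : (f x : EReal) + ⊤ - ((1 / (2 * t) - L / 2) * ‖xp - x‖ ^ 2 : ℝ) = ⊤ := by
      rw [EReal.coe_add_top]
      rfl
    rw [this]
    exact le_top
  · obtain ⟨s, hs⟩ : ∃ s : ℝ, h x = (s : EReal) :=
      ⟨(h x).toReal, (EReal.coe_toReal hxt (hne_bot x)).symm⟩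
    have hxpt : h xp ≠ ⊤ := by
      intro hT
      rw [hT, EReal.coe_add_top, hs] at hstep
      exact absurd hstep (by simp)
    obtain ⟨p, hp⟩ : ∃ p : ℝ, h xp = (p : EReal) :=
      ⟨(h xp).toReal, (EReal.coe_toReal hxpt (hne_bot xp)).symm⟩
    rw [hp, hs] at hstep ⊢
    have hstep' : ⟪gradient f x, xp - x⟫ + 1 / (2 * t) * ‖xp - x‖ ^ 2 + p ≤ s := by
      exact_mod_cast hstep
    have : f xp + p ≤ f x + s - (1 / (2 * t) - L / 2) * ‖xp - x‖ ^ 2 := by linarith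
    exact_mod_cast this
end

section
/- Let (a_k)_{k>=0} and (rho_k)_{k>=0} be sequences of nonnegative reals, phi_k real numbers bounded below by phi_*. Suppose for each k either (i) phi_k - phi_{k+1} >= c_1 a_{k+1}^2 with c_1 > 0, or (ii) phi_k - phi_{k+1} >= c_1 a_{k+1}^2 - c_2 rho_{k+1}^q where c_2 >= 0, q in (0,1), and moreover the indices k of type (ii) satisfy rho_{k+1} <= nu^{m(k)} rho_0 where m(k) is the number of type-(ii) indices up to k and nu in (0,1). Then the series sum_k a_k^2 converges, and hence a_k -> 0. -/
open Filter

/-- Abstract global convergence argument: telescoping descent inequalities with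
geometrically summable extra increase terms yields a summable residual series. -/
theorem descent_with_geometric_errors_summable
    (a ρ : ℕ → ℝ) (φ : ℕ → ℝ) (φstar : ℝ)
    (c₁ c₂ ν q ρ₀ : ℝ)
    (hc₁ : 0 < c₁) (hc₂ : 0 ≤ c₂) (hν : 0 < ν ∧ ν < 1) (hq : 0 < q ∧ q < 1)
    (hρ₀ : 0 < ρ₀)
    (ha : ∀ k, 0 ≤ a k) (hρ : ∀ k, 0 ≤ ρ k)
    (hφ : ∀ k, φstar ≤ φ k)
    (N : ℕ → Prop) [DecidablePred N]
    (hstep : ∀ k, ¬ N k → φ k - φ (k + 1) ≥ c₁ * a (k + 1) ^ 2)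
    (hstepN : ∀ k, N k → φ k - φ (k + 1) ≥ c₁ * a (k + 1) ^ 2 - c₂ * ρ (k + 1) ^ q)
    (hρN : ∀ k, N k →
      ρ (k + 1) ≤ ν ^ (((Finset.range (k + 1)).filter N).card) * ρ₀) :
    Summable (fun k => a k ^ 2) ∧ Tendsto a atTop (nhds 0) := by
  obtain ⟨hν0, hν1⟩ := hν
  obtain ⟨hq0, hq1⟩ := hq
  set t : ℝ := ν ^ q with ht
  have ht0 : 0 < t := Real.rpow_pos_of_pos hν0 q
  have ht1 : t < 1 := Real.rpow_lt_one hν0.le hν1 hq0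
  have hgeom : Summable (fun j : ℕ => t ^ j) := summable_geometric_of_lt_one ht0.le ht1
  set m : ℕ → ℕ := fun k => ((Finset.range (k + 1)).filter N).card with hm
  -- strict monotonicity of m on N-indices
  have hmono : ∀ x y, N x → N y → x < y → m x < m y := by
    intro x y hx hy hxy
    apply Finset.card_lt_card
    constructor
    · exact Finset.filter_subset_filter _ (Finset.range_subset_range.mpr (by omega))
    · intro hsub
      have : y ∈ (Finset.range (x + 1)).filter N :=
        hsub (Finset.mem_filter.mpr ⟨Finset.mem_range.mpr (by omega), hy⟩)
      have := Finset.mem_range.mp (Finset.mem_filter.mp this).1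
      omega
  set B : ℝ := (φ 0 - φstar) + c₂ * ρ₀ ^ q * ∑' j : ℕ, t ^ j with hB
  have key : ∀ n, ∑ k ∈ Finset.range n, a (k + 1) ^ 2 ≤ B / c₁ := by
    intro n
    rw [le_div_iff₀' hc₁, Finset.mul_sum]
    have tel : ∑ k ∈ Finset.range n, (φ k - φ (k + 1)) = φ 0 - φ n :=
      Finset.sum_range_sub' φ n
    have hterm : ∀ k ∈ Finset.range n,
        c₁ * a (k + 1) ^ 2 ≤ (φ k - φ (k + 1)) + (if N k then c₂ * ρ (k + 1) ^ q else 0) := by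
      intro k _
      by_cases hk : N k
      · simp only [hk, if_true]
        have := hstepN k hk
        linarith
      · simp only [hk, if_false]
        have := hstep k hk
        linarith
    have hterm2 : ∀ k ∈ (Finset.range n).filter N,
        c₂ * ρ (k + 1) ^ q ≤ c₂ * ρ₀ ^ q * t ^ m k := by
      intro k hk
      have hNk : N k := (Finset.mem_filter.mp hk).2
      have h1 : ρ (k + 1) ^ q ≤ (ν ^ m k * ρ₀) ^ q :=
        Real.rpow_le_rpow (hρ _) (hρN k hNk) hq0.le
      have h2 : (ν ^ m k * ρ₀) ^ q = t ^ m k * ρ₀ ^ q := by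
        rw [Real.mul_rpow (by positivity) hρ₀.le, ← Real.rpow_natCast ν (m k),
          ← Real.rpow_natCast t (m k), ht, ← Real.rpow_mul hν0.le,
          ← Real.rpow_mul hν0.le, mul_comm ((m k : ℝ)) q, mul_comm]
      calc c₂ * ρ (k + 1) ^ q ≤ c₂ * (t ^ m k * ρ₀ ^ q) := by
            rw [← h2]; exact mul_le_mul_of_nonneg_left h1 hc₂
        _ = c₂ * ρ₀ ^ q * t ^ m k := by ring
    have himg : ∑ k ∈ (Finset.range n).filter N, t ^ m k ≤ ∑' j : ℕ, t ^ j := by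
      have hinj : Set.InjOn m ((Finset.range n).filter N : Finset ℕ) := by
        intro x hx y hy hxy
        have hNx : N x := (Finset.mem_filter.mp hx).2
        have hNy : N y := (Finset.mem_filter.mp hy).2
        rcases lt_trichotomy x y with h | h | h
        · exact absurd hxy (ne_of_lt (hmono x y hNx hNy h))
        · exact h
        · exact absurd hxy.symm (ne_of_lt (hmono y x hNy hNx h))
      rw [← Finset.sum_image (fun x hx y hy h => hinj hx hy h)]
      exact Summable.sum_le_tsum _ (fun j _ => by positivity) hgeom
    have herr : ∑ k ∈ (Finset.range n).filter N, c₂ * ρ (k + 1) ^ q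
        ≤ c₂ * ρ₀ ^ q * ∑' j : ℕ, t ^ j := by
      calc ∑ k ∈ (Finset.range n).filter N, c₂ * ρ (k + 1) ^ q
          ≤ ∑ k ∈ (Finset.range n).filter N, c₂ * ρ₀ ^ q * t ^ m k :=
            Finset.sum_le_sum hterm2
        _ = c₂ * ρ₀ ^ q * ∑ k ∈ (Finset.range n).filter N, t ^ m k := by
            rw [Finset.mul_sum]
        _ ≤ c₂ * ρ₀ ^ q * ∑' j : ℕ, t ^ j := by
            apply mul_le_mul_of_nonneg_left himg (by positivity)
    calc ∑ k ∈ Finset.range n, c₁ * a (k + 1) ^ 2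
        ≤ ∑ k ∈ Finset.range n, ((φ k - φ (k + 1)) + (if N k then c₂ * ρ (k + 1) ^ q else 0)) :=
          Finset.sum_le_sum hterm
      _ = (φ 0 - φ n) + ∑ k ∈ (Finset.range n).filter N, c₂ * ρ (k + 1) ^ q := by
          rw [Finset.sum_add_distrib, tel, Finset.sum_ite, Finset.sum_const_zero, add_zero]
      _ ≤ B := by
          have := hφ n
          have := herr
          rw [hB]; linarith
  have hsum1 : Summable (fun k => a (k + 1) ^ 2) :=
    summable_of_sum_range_le (fun k => by positivity) key
  have hsum : Summable (fun k => a k ^ 2) :=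
    (summable_nat_add_iff 1).mp hsum1
  refine ⟨hsum, ?_⟩
  have h2 : Tendsto (fun k => a k ^ 2) atTop (nhds 0) := hsum.tendsto_atTop_zero
  have h3 : Tendsto (fun k => Real.sqrt (a k ^ 2)) atTop (nhds 0) := by
    have := (Real.continuous_sqrt.tendsto 0).comp h2
    simpa [Function.comp_def] using this
  refine h3.congr (fun k => ?_)
  rw [Real.sqrt_sq (ha k)]
end

section
/- For x in R^n with x^+ := max(x, 0) componentwise nonzero (||x^+|| > 0), the map P(x) = x^+ / ||x^+||_2 projects x onto the nonnegative part of the unit sphere: for every y in R^n with ||y||_2 = 1 and y >= 0 componentwise, ||x - P(x)||_2 <= ||x - y||_2. -/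
/-- The componentwise positive part of a vector. -/
noncomputable def posPart {n : ℕ} (x : EuclideanSpace ℝ (Fin n)) :
    EuclideanSpace ℝ (Fin n) :=
  WithLp.toLp 2 (fun i => max (x i) 0)

lemma inner_posPart_self {n : ℕ} (x : EuclideanSpace ℝ (Fin n)) :
    inner ℝ x (posPart x) = (‖posPart x‖ : ℝ) ^ 2 := by
  rw [← real_inner_self_eq_norm_sq, PiLp.inner_apply, PiLp.inner_apply]
  apply Finset.sum_congr rfl
  intro i _
  simp only [_root_.posPart, PiLp.toLp_apply, RCLike.inner_apply, conj_trivial]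
  rcases le_or_gt (x i) 0 with h | h
  · rw [max_eq_right h]; ring
  · rw [max_eq_left h.le]

lemma inner_le_inner_posPart {n : ℕ} (x y : EuclideanSpace ℝ (Fin n))
    (hy2 : ∀ i, 0 ≤ y i) : (inner ℝ x y : ℝ) ≤ inner ℝ (posPart x) y := by
  rw [PiLp.inner_apply, PiLp.inner_apply]
  apply Finset.sum_le_sum
  intro i _
  simp only [_root_.posPart, PiLp.toLp_apply, RCLike.inner_apply', conj_trivial]
  exact mul_le_mul_of_nonneg_right (le_max_left _ _) (hy2 i)

/-- `x⁺/‖x⁺‖` is a nearest point to `x` on the nonnegative part of the unit sphere. -/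
theorem posPart_normalized_is_projection {n : ℕ}
    (x : EuclideanSpace ℝ (Fin n)) (hx : 0 < ‖posPart x‖)
    (y : EuclideanSpace ℝ (Fin n)) (hy1 : ‖y‖ = 1) (hy2 : ∀ i, 0 ≤ y i) :
    ‖x - ‖posPart x‖⁻¹ • posPart x‖ ≤ ‖x - y‖ := by
  have hne : ‖posPart x‖ ≠ 0 := ne_of_gt hx
  have hP : ‖(‖posPart x‖⁻¹ • posPart x : EuclideanSpace ℝ (Fin n))‖ = 1 := by
    rw [norm_smul, norm_inv, norm_norm, inv_mul_cancel₀ hne]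
  have hip : (inner ℝ x (‖posPart x‖⁻¹ • posPart x) : ℝ) = ‖posPart x‖ := by
    rw [real_inner_smul_right, inner_posPart_self]
    field_simp
  have hiy : (inner ℝ x y : ℝ) ≤ ‖posPart x‖ := by
    calc (inner ℝ x y : ℝ) ≤ inner ℝ (posPart x) y := inner_le_inner_posPart x y hy2
    _ ≤ ‖posPart x‖ * ‖y‖ := real_inner_le_norm _ _
    _ = ‖posPart x‖ := by rw [hy1, mul_one]
  have sq_le : ‖x - ‖posPart x‖⁻¹ • posPart x‖ ^ 2 ≤ ‖x - y‖ ^ 2 := by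
    rw [norm_sub_sq_real, norm_sub_sq_real, hP, hy1, hip]
    nlinarith
  nlinarith [sq_le, norm_nonneg (x - y), norm_nonneg (x - ‖posPart x‖⁻¹ • posPart x)]
end
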